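/- Let A_T = I + ∑_{t=1}^T x_t x_t^⊤/r with r > 0 and ‖x_t‖₂ ≤ X. Then ∑_{t=1}^T x_t^⊤ A_t^{-1} x_t ≤ r·d·log(1 + T X²/r), where A_t = I + ∑_{s=1}^t x_s x_s^⊤/r. -/

import Mathlib

open Matrix Finset

section Aux

variable {d : ℕ}

lemma myVecMulVec_mulVec (x v : Fin d → ℝ) :
    (vecMulVec x x) *ᵥ v = (x ⬝ᵥ v) • x := by
  ext i
  simp [vecMulVec, mulVec, dotProduct, Finset.mul_sum, mul_comm, mul_left_comm]

lemma myPosSemidef_smul_vecMulVec {c : ℝ} (hc : 0 ≤ c) (x : Fin d → ℝ) :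
    (c • vecMulVec x x).PosSemidef := by
  refine Matrix.PosSemidef.of_dotProduct_mulVec_nonneg ?_ ?_
  · unfold Matrix.IsHermitian
    ext i j
    simp [vecMulVec, mul_comm]
  · intro v
    rw [smul_mulVec, myVecMulVec_mulVec, star_trivial, dotProduct_smul,
      dotProduct_smul, smul_eq_mul, smul_eq_mul, dotProduct_comm]
    exact mul_nonneg hc (mul_self_nonneg _)

lemma myMul_vecMulVec (M : Matrix (Fin d) (Fin d) ℝ) (u w : Fin d → ℝ) :
    M * vecMulVec u w = vecMulVec (M *ᵥ u) w := by
  ext i j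
  simp [vecMulVec, mul_apply, mulVec, dotProduct, Finset.sum_mul, mul_assoc]

/-- determinant of a rank-one update -/
lemma myDet_add_smul_vecMulVec (M : Matrix (Fin d) (Fin d) ℝ) (hM : M.PosDef)
    {c : ℝ} (x : Fin d → ℝ) :
    (M + c • vecMulVec x x).det = M.det * (1 + c * (x ⬝ᵥ M⁻¹ *ᵥ x)) := by
  have hinv : M * M⁻¹ = 1 := Matrix.mul_nonsing_inv _ hM.det_pos.ne'.isUnit
  have key : M + c • vecMulVec x x = M * (1 + vecMulVec (c • (M⁻¹ *ᵥ x)) x) := by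
    rw [Matrix.mul_add, mul_one, myMul_vecMulVec]
    congr 1
    rw [mulVec_smul, mulVec_mulVec, hinv, one_mulVec]
    ext i j
    simp [vecMulVec, mul_assoc]
  rw [key, det_mul, vecMulVec_eq Unit, det_one_add_replicateCol_mul_replicateRow]
  congr 1
  rw [dotProduct_smul, smul_eq_mul]

lemma myQuad_add_smul_vecMulVec (M : Matrix (Fin d) (Fin d) ℝ) (hM : M.PosDef)
    {c : ℝ} (hc : 0 ≤ c) (x : Fin d → ℝ) :
    x ⬝ᵥ (M + c • vecMulVec x x)⁻¹ *ᵥ x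
      = (x ⬝ᵥ M⁻¹ *ᵥ x) / (1 + c * (x ⬝ᵥ M⁻¹ *ᵥ x)) := by
  set q : ℝ := x ⬝ᵥ M⁻¹ *ᵥ x with hq
  have hq0 : 0 ≤ q := by
    have := hM.inv.posSemidef.dotProduct_mulVec_nonneg x
    rwa [star_trivial] at this
  have hpos : 0 < 1 + c * q := by positivity
  set B : Matrix (Fin d) (Fin d) ℝ := M + c • vecMulVec x x with hB
  have hBpd : B.PosDef := hM.add_posSemidef (myPosSemidef_smul_vecMulVec hc x)
  have hBinv : B⁻¹ * B = 1 := Matrix.nonsing_inv_mul _ hBpd.det_pos.ne'.isUnit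
  have hMinv : M * M⁻¹ = 1 := Matrix.mul_nonsing_inv _ hM.det_pos.ne'.isUnit
  have h1 : B *ᵥ (M⁻¹ *ᵥ x) = (1 + c * q) • x := by
    rw [hB, add_mulVec, mulVec_mulVec, hMinv, one_mulVec, smul_mulVec,
      myVecMulVec_mulVec, smul_smul, ← hq, add_smul, one_smul]
  have h2 : B⁻¹ *ᵥ x = (1 + c * q)⁻¹ • (M⁻¹ *ᵥ x) := by
    have := congrArg (fun v => B⁻¹ *ᵥ v) h1
    simp only [mulVec_mulVec, mulVec_smul] at this
    rw [← Matrix.mul_assoc, hBinv, Matrix.one_mul] at this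
    rw [this, smul_smul, inv_mul_cancel₀ hpos.ne', one_smul]
  rw [h2, dotProduct_smul, smul_eq_mul, ← hq, div_eq_inv_mul]

lemma myDiv_le_log {u : ℝ} (hu : 0 ≤ u) : u / (1 + u) ≤ Real.log (1 + u) := by
  have h1 : (0:ℝ) < 1 + u := by linarith
  have h2 := Real.log_le_sub_one_of_pos (inv_pos.mpr h1)
  rw [Real.log_inv] at h2
  have h3 : u / (1 + u) = 1 - (1 + u)⁻¹ := by field_simp; ring
  linarith

lemma myEig_le {M : Matrix (Fin d) (Fin d) ℝ} (hM : M.PosDef) {b : ℝ}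
    (h : ∀ v : Fin d → ℝ, ∑ i, v i ^ 2 = 1 → v ⬝ᵥ M *ᵥ v ≤ b) (i : Fin d) :
    hM.1.eigenvalues i ≤ b := by
  rw [hM.1.eigenvalues_eq]
  set v : Fin d → ℝ := ⇑(hM.1.eigenvectorBasis i) with hv
  have hnorm : ‖hM.1.eigenvectorBasis i‖ = 1 := hM.1.eigenvectorBasis.orthonormal.1 i
  have hsum : ∑ j, v j ^ 2 = 1 := by
    have := congrArg (fun t : ℝ => t ^ 2) hnorm
    rw [EuclideanSpace.norm_eq] at this
    simp only [Real.norm_eq_abs, sq_abs, one_pow] at this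
    rw [Real.sq_sqrt (by positivity)] at this
    exact this
  have := h v hsum
  simpa using this

lemma myLogDet_le {M : Matrix (Fin d) (Fin d) ℝ} (hM : M.PosDef) {b : ℝ} (hb : 0 < b)
    (h : ∀ i, hM.1.eigenvalues i ≤ b) :
    Real.log M.det ≤ (d : ℝ) * Real.log b := by
  have hdet : M.det = ∏ i, hM.1.eigenvalues i := by
    simpa using hM.1.det_eq_prod_eigenvalues
  have hle : M.det ≤ b ^ d := by
    rw [hdet]
    calc ∏ i, hM.1.eigenvalues i ≤ ∏ _i : Fin d, b :=
          Finset.prod_le_prod (fun i _ => (hM.eigenvalues_pos i).le) (fun i _ => h i)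
      _ = b ^ d := by simp
  calc Real.log M.det ≤ Real.log (b ^ d) := Real.log_le_log hM.det_pos hle
    _ = (d : ℝ) * Real.log b := by rw [Real.log_pow]

/-- `∑_{t=1}^T x_tᵀ A_t⁻¹ x_t ≤ r d log(1 + T X² / r)` where
`A_t = I + ∑_{s=1}^t x_s x_sᵀ / r` and `‖x_t‖₂ ≤ X`. -/
theorem sum_quad_form_inv_le_dim_log {d : ℕ} (r X : ℝ) (hr : 0 < r)
    (T : ℕ) (x : ℕ → Fin d → ℝ)
    (hx : ∀ t ∈ Finset.Icc 1 T, Real.sqrt (∑ i, (x t i) ^ 2) ≤ X)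
    (A : ℕ → Matrix (Fin d) (Fin d) ℝ)
    (hA : ∀ t, A t = 1 + ∑ s ∈ Finset.Icc 1 t, r⁻¹ • Matrix.vecMulVec (x s) (x s)) :
    ∑ t ∈ Finset.Icc 1 T, x t ⬝ᵥ (A t)⁻¹.mulVec (x t) ≤
      r * (d : ℝ) * Real.log (1 + (T : ℝ) * X ^ 2 / r) := by
  have hc : (0:ℝ) ≤ r⁻¹ := by positivity
  -- positive definiteness
  have hPSDsum : ∀ t, (∑ s ∈ Finset.Icc 1 t, r⁻¹ • vecMulVec (x s) (x s)).PosSemidef := by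
    intro t
    induction (Finset.Icc 1 t) using Finset.induction_on with
    | empty => simpa using Matrix.PosSemidef.zero
    | insert _ _ hnot ih =>
        rw [Finset.sum_insert hnot]
        exact (myPosSemidef_smul_vecMulVec hc _).add ih
  have hPD : ∀ t, (A t).PosDef := by
    intro t
    rw [hA t]
    exact Matrix.PosDef.add_posSemidef Matrix.PosDef.one (hPSDsum t)
  have hA0 : A 0 = 1 := by rw [hA 0]; simp
  set L : ℕ → ℝ := fun t => Real.log (A t).det with hL
  have hAsucc : ∀ i : ℕ, A (i+1) = A i + r⁻¹ • vecMulVec (x (i+1)) (x (i+1)) := by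
    intro i
    rw [hA (i+1), hA i, Finset.sum_Icc_succ_top (Nat.succ_le_succ (Nat.zero_le i)), ← add_assoc]
  -- per-step bound
  have hstep : ∀ i : ℕ, x (i+1) ⬝ᵥ (A (i+1))⁻¹ *ᵥ x (i+1) ≤ r * (L (i+1) - L i) := by
    intro i
    set q : ℝ := x (i+1) ⬝ᵥ (A i)⁻¹ *ᵥ x (i+1) with hqdef
    have hq0 : 0 ≤ q := by
      have := (hPD i).inv.posSemidef.dotProduct_mulVec_nonneg (x (i+1))
      rwa [star_trivial] at this
    have hu0 : 0 ≤ r⁻¹ * q := mul_nonneg hc hq0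
    have hupos : (0:ℝ) < 1 + r⁻¹ * q := by linarith
    have hval : x (i+1) ⬝ᵥ (A (i+1))⁻¹ *ᵥ x (i+1) = q / (1 + r⁻¹ * q) := by
      rw [hAsucc i]
      exact myQuad_add_smul_vecMulVec (A i) (hPD i) hc (x (i+1))
    have hdet : (A (i+1)).det = (A i).det * (1 + r⁻¹ * q) := by
      rw [hAsucc i]
      exact myDet_add_smul_vecMulVec (A i) (hPD i) (x (i+1))
    have hLdiff : L (i+1) - L i = Real.log (1 + r⁻¹ * q) := by
      rw [hL]
      simp only
      rw [hdet, Real.log_mul (hPD i).det_pos.ne' hupos.ne']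
      ring
    rw [hval, hLdiff]
    have hlog := myDiv_le_log hu0
    have heq : q / (1 + r⁻¹ * q) = r * ((r⁻¹ * q) / (1 + r⁻¹ * q)) := by
      field_simp
    rw [heq]
    exact mul_le_mul_of_nonneg_left hlog hr.le
  -- X bound
  have hX2 : ∀ t ∈ Finset.Icc 1 T, ∑ i, (x t i) ^ 2 ≤ X ^ 2 := by
    intro t ht
    have h1 := hx t ht
    have h2 : 0 ≤ ∑ i, (x t i) ^ 2 := by positivity
    calc ∑ i, (x t i) ^ 2 = Real.sqrt (∑ i, (x t i) ^ 2) ^ 2 := (Real.sq_sqrt h2).symm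
      _ ≤ X ^ 2 := by
          have h0 : 0 ≤ Real.sqrt (∑ i, (x t i) ^ 2) := Real.sqrt_nonneg _
          exact pow_le_pow_left₀ h0 h1 2
  -- bound on log det (A T)
  have hb : (0:ℝ) < 1 + (T : ℝ) * X ^ 2 / r := by
    rcases Nat.eq_zero_or_pos T with hT | hT
    · simp [hT]
    · have hX0 : 0 ≤ X := le_trans (Real.sqrt_nonneg _) (hx T (Finset.mem_Icc.mpr ⟨hT, le_rfl⟩))
      positivity
  have hquad : ∀ v : Fin d → ℝ, ∑ i, v i ^ 2 = 1 →
      v ⬝ᵥ (A T) *ᵥ v ≤ 1 + (T : ℝ) * X ^ 2 / r := by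
    intro v hv
    rw [hA T, add_mulVec, dotProduct_add, one_mulVec]
    have hvv : v ⬝ᵥ v = 1 := by
      rw [dotProduct]
      rw [← hv]
      exact Finset.sum_congr rfl fun i _ => (sq (v i)).symm
    have hrest : v ⬝ᵥ (∑ s ∈ Finset.Icc 1 T, r⁻¹ • vecMulVec (x s) (x s)) *ᵥ v
        ≤ (T : ℝ) * X ^ 2 / r := by
      have hsmv : v ⬝ᵥ (∑ s ∈ Finset.Icc 1 T, r⁻¹ • vecMulVec (x s) (x s)) *ᵥ v
          = ∑ s ∈ Finset.Icc 1 T, v ⬝ᵥ (r⁻¹ • vecMulVec (x s) (x s)) *ᵥ v := by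
        induction (Finset.Icc 1 T) using Finset.induction_on with
        | empty => simp
        | insert _ _ hnot ih =>
            rw [Finset.sum_insert hnot, Finset.sum_insert hnot, add_mulVec, dotProduct_add, ih]
      rw [hsmv]
      have hterm : ∀ s ∈ Finset.Icc 1 T,
          v ⬝ᵥ (r⁻¹ • vecMulVec (x s) (x s)) *ᵥ v ≤ r⁻¹ * X ^ 2 := by
        intro s hs
        rw [smul_mulVec, myVecMulVec_mulVec, dotProduct_smul, dotProduct_smul,
          smul_eq_mul, smul_eq_mul, dotProduct_comm v (x s)]
        have hcs : (x s ⬝ᵥ v) * (x s ⬝ᵥ v) ≤ X ^ 2 := by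
          have := Finset.sum_mul_sq_le_sq_mul_sq Finset.univ (x s) v
          rw [hv, mul_one] at this
          calc (x s ⬝ᵥ v) * (x s ⬝ᵥ v) = (∑ i, x s i * v i) ^ 2 := by rw [sq]; rfl
            _ ≤ ∑ i, (x s i) ^ 2 := this
            _ ≤ X ^ 2 := hX2 s hs
        exact mul_le_mul_of_nonneg_left hcs hc
      calc ∑ s ∈ Finset.Icc 1 T, v ⬝ᵥ (r⁻¹ • vecMulVec (x s) (x s)) *ᵥ v
          ≤ ∑ _s ∈ Finset.Icc 1 T, r⁻¹ * X ^ 2 := Finset.sum_le_sum hterm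
        _ = (T : ℝ) * X ^ 2 / r := by
            rw [Finset.sum_const, Nat.card_Icc]
            simp
            ring
    linarith
  have hlogdet : L T ≤ (d : ℝ) * Real.log (1 + (T : ℝ) * X ^ 2 / r) :=
    myLogDet_le (hPD T) hb (fun i => myEig_le (hPD T) hquad i)
  -- assemble
  have hsum : ∀ N : ℕ, ∑ t ∈ Finset.Icc 1 N, x t ⬝ᵥ (A t)⁻¹ *ᵥ x t
      = ∑ i ∈ Finset.range N, x (i+1) ⬝ᵥ (A (i+1))⁻¹ *ᵥ x (i+1) := by
    intro N
    induction N with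
    | zero => simp
    | succ n ih =>
        rw [Finset.sum_Icc_succ_top (Nat.succ_le_succ (Nat.zero_le n)), ih,
          Finset.sum_range_succ]
  have htel : ∑ i ∈ Finset.range T, r * (L (i+1) - L i) = r * (L T - L 0) := by
    rw [← Finset.mul_sum, Finset.sum_range_sub]
  have hL0 : L 0 = 0 := by
    rw [hL]; simp only; rw [hA0]; simp
  calc ∑ t ∈ Finset.Icc 1 T, x t ⬝ᵥ (A t)⁻¹ *ᵥ x t
      = ∑ i ∈ Finset.range T, x (i+1) ⬝ᵥ (A (i+1))⁻¹ *ᵥ x (i+1) := hsum T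
    _ ≤ ∑ i ∈ Finset.range T, r * (L (i+1) - L i) :=
        Finset.sum_le_sum fun i _ => hstep i
    _ = r * (L T - L 0) := htel
    _ = r * L T := by rw [hL0]; ring
    _ ≤ r * ((d : ℝ) * Real.log (1 + (T : ℝ) * X ^ 2 / r)) :=
        mul_le_mul_of_nonneg_left hlogdet hr.le
    _ = r * (d : ℝ) * Real.log (1 + (T : ℝ) * X ^ 2 / r) := by ring

end Aux
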